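/- arXiv:1709.09993 — 5 statements merged into one kernel-verified Lean document; each statement's English description precedes it below -/
import Mathlib

section
/- Suppose U, W : ℂ → ℂ are nowhere-vanishing functions satisfying U(z₁−z₂)·W(z₂−z₃) + W(z₁−z₃)·W(z₂−z₃) = U(z₁−z₂)·W(z₁−z₃) for all admissible z₁,z₂,z₃, where U(z) = ħ/z for a fixed nonzero constant ħ. Then there is a constant b such that W(z) = −ħ/(z − ħ·b). -/
/-- If `U, W : ℂ → ℂ` are nowhere vanishing on the nonzero complex numbers, `U z = ħ / z`
for a fixed nonzero constant `ħ`, and the Yang–Baxter constraint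
`U(z₁−z₂)·W(z₂−z₃) + W(z₁−z₃)·W(z₂−z₃) = U(z₁−z₂)·W(z₁−z₃)` holds for all admissible
`z₁, z₂, z₃`, then there is a constant `b` with `W z = −ħ/(z − ħ·b)`. -/
theorem yang_baxter_dual_ratio (hbar : ℂ) (hhbar : hbar ≠ 0) (U W : ℂ → ℂ)
    (hUdef : ∀ z : ℂ, U z = hbar / z)
    (hWne : ∀ z : ℂ, z ≠ 0 → W z ≠ 0)
    (hYB : ∀ z₁ z₂ z₃ : ℂ, z₁ ≠ z₂ → z₁ ≠ z₃ → z₂ ≠ z₃ →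
      U (z₁ - z₂) * W (z₂ - z₃) + W (z₁ - z₃) * W (z₂ - z₃)
        = U (z₁ - z₂) * W (z₁ - z₃)) :
    ∃ b : ℂ, ∀ z : ℂ, z ≠ 0 → W z = -hbar / (z - hbar * b) := by
  have key : ∀ x y : ℂ, x ≠ 0 → y ≠ 0 → x ≠ y →
      1 / W x + x / hbar = 1 / W y + y / hbar := by
    intro x y hx hy hxy
    have h := hYB x y 0 hxy (by simpa using hx) (by simpa using hy)
    rw [hUdef] at h
    simp only [sub_zero] at h
    have hWx := hWne x hx
    have hWy := hWne y hy
    have hsub : x - y ≠ 0 := sub_ne_zero.mpr hxy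
    field_simp at h
    rw [div_add_div _ _ hWx hhbar, div_add_div _ _ hWy hhbar,
      div_eq_div_iff (mul_ne_zero hWx hhbar) (mul_ne_zero hWy hhbar)]
    linear_combination hbar * h
  set b : ℂ := 1 / W 1 + 1 / hbar with hb
  refine ⟨b, fun z hz => ?_⟩
  have hinv : 1 / W z + z / hbar = b := by
    by_cases h1 : z = 1
    · rw [h1]
    · have := key z 1 hz one_ne_zero h1
      rw [this]
  have hWz := hWne z hz
  have hden : z - hbar * b ≠ 0 := by
    intro h0
    have hzb : z = hbar * b := sub_eq_zero.mp h0
    have h1 : 1 / W z = 0 := by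
      have h2 : 1 / W z = b - z / hbar := by linear_combination hinv
      rw [h2, hzb]
      field_simp
      ring
    exact one_div_ne_zero hWz h1
  rw [eq_div_iff hden]
  field_simp at hinv
  linear_combination hinv
end

section
/- Suppose X, Y : ℂ → ℂ are functions with X(z) = ħ/z (ħ ≠ 0) and Y nowhere vanishing satisfying Y(z₁−z₃)·X(z₂−z₃) = Y(z₁−z₂)·Y(z₁−z₃) + Y(z₁−z₂)·X(z₂−z₃), together with the unitarity relation N·Y(z)·Y(−z) + Y(z) + Y(−z) + X(z)·Y(−z) + X(−z)·Y(z) = 0. Then Y(z) = −ħ/(z + (N−2)ħ/2). -/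
/-- For the `SO(N)` rational R-matrix ratios: if `X z = ħ/z` (with `ħ ≠ 0`), `Y` is nowhere
vanishing, the Yang–Baxter constraint
`Y(z₁−z₃)·X(z₂−z₃) = Y(z₁−z₂)·Y(z₁−z₃) + Y(z₁−z₂)·X(z₂−z₃)` holds, together with the
unitarity relation `N·Y(z)·Y(−z) + Y(z) + Y(−z) + X(z)·Y(−z) + X(−z)·Y(z) = 0`, then
`Y z = −ħ/(z + (N−2)·ħ/2)`. -/
theorem so_N_ratio (N : ℕ) (hN : 1 ≤ N) (hbar : ℂ) (hhbar : hbar ≠ 0)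
    (X Y : ℂ → ℂ)
    (hX : ∀ z : ℂ, X z = hbar / z)
    (hYne : ∀ z : ℂ, z ≠ 0 → Y z ≠ 0)
    (hYB : ∀ z₁ z₂ z₃ : ℂ, z₁ ≠ z₂ → z₁ ≠ z₃ → z₂ ≠ z₃ →
      Y (z₁ - z₃) * X (z₂ - z₃)
        = Y (z₁ - z₂) * Y (z₁ - z₃) + Y (z₁ - z₂) * X (z₂ - z₃))
    (hUnit : ∀ z : ℂ, z ≠ 0 →
      (N : ℂ) * Y z * Y (-z) + Y z + Y (-z) + X z * Y (-z) + X (-z) * Y z = 0) :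
    ∀ z : ℂ, z ≠ 0 → z + ((N : ℂ) - 2) * hbar / 2 ≠ 0 →
      Y z = -hbar / (z + ((N : ℂ) - 2) * hbar / 2) := by
  have hA : ∀ u v : ℂ, u ≠ 0 → v ≠ 0 → u ≠ v →
      hbar * Y v = (v - u) * (Y u * Y v) + hbar * Y u := by
    intro u v hu hv huv
    have h1 : v ≠ v - u := by intro h; exact hu (by linear_combination h)
    have h3 : v - u ≠ 0 := sub_ne_zero.mpr (Ne.symm huv)
    have h := hYB v (v - u) 0 h1 hv h3
    simp only [sub_zero, sub_sub_cancel] at h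
    rw [hX] at h
    field_simp [h3] at h
    linear_combination h
  set a : ℂ := hbar / Y 1 + 1 with ha
  have hg : ∀ z : ℂ, z ≠ 0 → hbar = (a - z) * Y z := by
    intro z hz
    have hY1 := hYne 1 one_ne_zero
    by_cases h1 : z = 1
    · subst h1; rw [ha]; simp [hY1]
    · have hAz := hA 1 z one_ne_zero hz (Ne.symm h1)
      have hYz := hYne z hz
      rw [ha]
      field_simp
      linear_combination -hAz
  have haz : ∀ z : ℂ, z ≠ 0 → a - z ≠ 0 := by
    intro z hz h
    exact hhbar (by rw [hg z hz, h, zero_mul])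
  have hYform : ∀ z : ℂ, z ≠ 0 → Y z = hbar / (a - z) := by
    intro z hz
    rw [eq_div_iff (haz z hz), hg z hz]; ring
  -- use unitarity at z = 1
  have hu1 := hUnit 1 one_ne_zero
  rw [hX, hX] at hu1
  norm_num at hu1
  have e1 : hbar = (a - 1) * Y 1 := hg 1 one_ne_zero
  have e2 : hbar = (a + 1) * Y (-1) := by
    have := hg (-1) (by norm_num); rwa [sub_neg_eq_add] at this
  have hkey : hbar * (2 * a + ((N : ℂ) - 2) * hbar) = 0 := by
    linear_combination ((a - 1) * (a + 1)) * hu1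
      + ((N : ℂ) * Y (-1) * (a + 1) + (a + 1) - hbar * (a + 1)) * e1
      + ((N : ℂ) * hbar + (a - 1) + hbar * (a - 1)) * e2
  have hk2 : 2 * a + ((N : ℂ) - 2) * hbar = 0 := (mul_eq_zero.mp hkey).resolve_left hhbar
  intro z hz hz2
  have haz' : a - z = -(z + ((N : ℂ) - 2) * hbar / 2) := by linear_combination (1/2 : ℂ) * hk2
  rw [hYform z hz, haz', div_neg, neg_div]
end

section
/- Let g be a Lie algebra with structure constants f_{ab}^c relative to a basis t_a, and let ρ', ρ'' be representations of g on V', V''. Define operators on V'⊗V'' by t_{a,0} = t'_a⊗1 + 1⊗t''_a and t_{a,1} = −(ħ/2)·∑_{b,c} f_{abc}·t'_b⊗t''_c. Then in general the Jacobi-type identity f_{uva}[t_{a,1}, t_{b,1}] + f_{vba}[t_{a,1}, t_{u,1}] + f_{bua}[t_{a,1}, t_{v,1}] = 0 fails; equivalently, the assignment t_a z⁰ ↦ t_{a,0}, t_a z¹ ↦ t_{a,1}, t_a zⁿ ↦ 0 (n ≥ 2) does not in general define a Lie algebra representation of g[z]. -/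
open scoped Kronecker BigOperators

/-- The one-loop corrected level-one generator on `V' ⊗ V''`:
`t_{a,1} = −(ħ/2)·∑_{b,c} f_{abc}·ρ'(t_b) ⊗ ρ''(t_c)`. -/
noncomputable def levelOne {n m : ℕ} (hbar : ℂ) (f : Fin n → Fin n → Fin n → ℂ)
    (ρ' ρ'' : Fin n → Matrix (Fin m) (Fin m) ℂ) (a : Fin n) :
    Matrix (Fin m × Fin m) (Fin m × Fin m) ℂ :=
  (-(hbar / 2)) • ∑ b, ∑ c, f a b c • (ρ' b ⊗ₖ ρ'' c)



set_option maxHeartbeats 40000000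
set_option maxRecDepth 100000

def Fz : Fin 10 → Fin 10 → Fin 10 → ℤ :=
  ![![![0, 0, 0, 0, 0, 0, 0, 0, 0, 0], ![0, 0, 0, 0, -1, 0, 0, 0, 0, 0], ![0, 0, 0, 0, 0, -1, 0, 0, 0, 0], ![0, 0, 0, 0, 0, 0, -1, 0, 0, 0], ![0, 1, 0, 0, 0, 0, 0, 0, 0, 0], ![0, 0, 1, 0, 0, 0, 0, 0, 0, 0], ![0, 0, 0, 1, 0, 0, 0, 0, 0, 0], ![0, 0, 0, 0, 0, 0, 0, 0, 0, 0], ![0, 0, 0, 0, 0, 0, 0, 0, 0, 0], ![0, 0, 0, 0, 0, 0, 0, 0, 0, 0]],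
    ![![0, 0, 0, 0, 1, 0, 0, 0, 0, 0], ![0, 0, 0, 0, 0, 0, 0, 0, 0, 0], ![0, 0, 0, 0, 0, 0, 0, -1, 0, 0], ![0, 0, 0, 0, 0, 0, 0, 0, -1, 0], ![-1, 0, 0, 0, 0, 0, 0, 0, 0, 0], ![0, 0, 0, 0, 0, 0, 0, 0, 0, 0], ![0, 0, 0, 0, 0, 0, 0, 0, 0, 0], ![0, 0, 1, 0, 0, 0, 0, 0, 0, 0], ![0, 0, 0, 1, 0, 0, 0, 0, 0, 0], ![0, 0, 0, 0, 0, 0, 0, 0, 0, 0]],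
    ![![0, 0, 0, 0, 0, 1, 0, 0, 0, 0], ![0, 0, 0, 0, 0, 0, 0, 1, 0, 0], ![0, 0, 0, 0, 0, 0, 0, 0, 0, 0], ![0, 0, 0, 0, 0, 0, 0, 0, 0, -1], ![0, 0, 0, 0, 0, 0, 0, 0, 0, 0], ![-1, 0, 0, 0, 0, 0, 0, 0, 0, 0], ![0, 0, 0, 0, 0, 0, 0, 0, 0, 0], ![0, -1, 0, 0, 0, 0, 0, 0, 0, 0], ![0, 0, 0, 0, 0, 0, 0, 0, 0, 0], ![0, 0, 0, 1, 0, 0, 0, 0, 0, 0]],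
    ![![0, 0, 0, 0, 0, 0, 1, 0, 0, 0], ![0, 0, 0, 0, 0, 0, 0, 0, 1, 0], ![0, 0, 0, 0, 0, 0, 0, 0, 0, 1], ![0, 0, 0, 0, 0, 0, 0, 0, 0, 0], ![0, 0, 0, 0, 0, 0, 0, 0, 0, 0], ![0, 0, 0, 0, 0, 0, 0, 0, 0, 0], ![-1, 0, 0, 0, 0, 0, 0, 0, 0, 0], ![0, 0, 0, 0, 0, 0, 0, 0, 0, 0], ![0, -1, 0, 0, 0, 0, 0, 0, 0, 0], ![0, 0, -1, 0, 0, 0, 0, 0, 0, 0]],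
    ![![0, -1, 0, 0, 0, 0, 0, 0, 0, 0], ![1, 0, 0, 0, 0, 0, 0, 0, 0, 0], ![0, 0, 0, 0, 0, 0, 0, 0, 0, 0], ![0, 0, 0, 0, 0, 0, 0, 0, 0, 0], ![0, 0, 0, 0, 0, 0, 0, 0, 0, 0], ![0, 0, 0, 0, 0, 0, 0, -1, 0, 0], ![0, 0, 0, 0, 0, 0, 0, 0, -1, 0], ![0, 0, 0, 0, 0, 1, 0, 0, 0, 0], ![0, 0, 0, 0, 0, 0, 1, 0, 0, 0], ![0, 0, 0, 0, 0, 0, 0, 0, 0, 0]],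
    ![![0, 0, -1, 0, 0, 0, 0, 0, 0, 0], ![0, 0, 0, 0, 0, 0, 0, 0, 0, 0], ![1, 0, 0, 0, 0, 0, 0, 0, 0, 0], ![0, 0, 0, 0, 0, 0, 0, 0, 0, 0], ![0, 0, 0, 0, 0, 0, 0, 1, 0, 0], ![0, 0, 0, 0, 0, 0, 0, 0, 0, 0], ![0, 0, 0, 0, 0, 0, 0, 0, 0, -1], ![0, 0, 0, 0, -1, 0, 0, 0, 0, 0], ![0, 0, 0, 0, 0, 0, 0, 0, 0, 0], ![0, 0, 0, 0, 0, 0, 1, 0, 0, 0]],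
    ![![0, 0, 0, -1, 0, 0, 0, 0, 0, 0], ![0, 0, 0, 0, 0, 0, 0, 0, 0, 0], ![0, 0, 0, 0, 0, 0, 0, 0, 0, 0], ![1, 0, 0, 0, 0, 0, 0, 0, 0, 0], ![0, 0, 0, 0, 0, 0, 0, 0, 1, 0], ![0, 0, 0, 0, 0, 0, 0, 0, 0, 1], ![0, 0, 0, 0, 0, 0, 0, 0, 0, 0], ![0, 0, 0, 0, 0, 0, 0, 0, 0, 0], ![0, 0, 0, 0, -1, 0, 0, 0, 0, 0], ![0, 0, 0, 0, 0, -1, 0, 0, 0, 0]],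
    ![![0, 0, 0, 0, 0, 0, 0, 0, 0, 0], ![0, 0, -1, 0, 0, 0, 0, 0, 0, 0], ![0, 1, 0, 0, 0, 0, 0, 0, 0, 0], ![0, 0, 0, 0, 0, 0, 0, 0, 0, 0], ![0, 0, 0, 0, 0, -1, 0, 0, 0, 0], ![0, 0, 0, 0, 1, 0, 0, 0, 0, 0], ![0, 0, 0, 0, 0, 0, 0, 0, 0, 0], ![0, 0, 0, 0, 0, 0, 0, 0, 0, 0], ![0, 0, 0, 0, 0, 0, 0, 0, 0, -1], ![0, 0, 0, 0, 0, 0, 0, 0, 1, 0]],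
    ![![0, 0, 0, 0, 0, 0, 0, 0, 0, 0], ![0, 0, 0, -1, 0, 0, 0, 0, 0, 0], ![0, 0, 0, 0, 0, 0, 0, 0, 0, 0], ![0, 1, 0, 0, 0, 0, 0, 0, 0, 0], ![0, 0, 0, 0, 0, 0, -1, 0, 0, 0], ![0, 0, 0, 0, 0, 0, 0, 0, 0, 0], ![0, 0, 0, 0, 1, 0, 0, 0, 0, 0], ![0, 0, 0, 0, 0, 0, 0, 0, 0, 1], ![0, 0, 0, 0, 0, 0, 0, 0, 0, 0], ![0, 0, 0, 0, 0, 0, 0, -1, 0, 0]],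
    ![![0, 0, 0, 0, 0, 0, 0, 0, 0, 0], ![0, 0, 0, 0, 0, 0, 0, 0, 0, 0], ![0, 0, 0, -1, 0, 0, 0, 0, 0, 0], ![0, 0, 1, 0, 0, 0, 0, 0, 0, 0], ![0, 0, 0, 0, 0, 0, 0, 0, 0, 0], ![0, 0, 0, 0, 0, 0, -1, 0, 0, 0], ![0, 0, 0, 0, 0, 1, 0, 0, 0, 0], ![0, 0, 0, 0, 0, 0, 0, 0, -1, 0], ![0, 0, 0, 0, 0, 0, 0, 1, 0, 0], ![0, 0, 0, 0, 0, 0, 0, 0, 0, 0]]]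

def Rz : Fin 10 → Matrix (Fin 5) (Fin 5) ℤ :=
  ![!![0, 1, 0, 0, 0; -1, 0, 0, 0, 0; 0, 0, 0, 0, 0; 0, 0, 0, 0, 0; 0, 0, 0, 0, 0],
    !![0, 0, 1, 0, 0; 0, 0, 0, 0, 0; -1, 0, 0, 0, 0; 0, 0, 0, 0, 0; 0, 0, 0, 0, 0],
    !![0, 0, 0, 1, 0; 0, 0, 0, 0, 0; 0, 0, 0, 0, 0; -1, 0, 0, 0, 0; 0, 0, 0, 0, 0],
    !![0, 0, 0, 0, 1; 0, 0, 0, 0, 0; 0, 0, 0, 0, 0; 0, 0, 0, 0, 0; -1, 0, 0, 0, 0],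
    !![0, 0, 0, 0, 0; 0, 0, 1, 0, 0; 0, -1, 0, 0, 0; 0, 0, 0, 0, 0; 0, 0, 0, 0, 0],
    !![0, 0, 0, 0, 0; 0, 0, 0, 1, 0; 0, 0, 0, 0, 0; 0, -1, 0, 0, 0; 0, 0, 0, 0, 0],
    !![0, 0, 0, 0, 0; 0, 0, 0, 0, 1; 0, 0, 0, 0, 0; 0, 0, 0, 0, 0; 0, -1, 0, 0, 0],
    !![0, 0, 0, 0, 0; 0, 0, 0, 0, 0; 0, 0, 0, 1, 0; 0, 0, -1, 0, 0; 0, 0, 0, 0, 0],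
    !![0, 0, 0, 0, 0; 0, 0, 0, 0, 0; 0, 0, 0, 0, 1; 0, 0, 0, 0, 0; 0, 0, -1, 0, 0],
    !![0, 0, 0, 0, 0; 0, 0, 0, 0, 0; 0, 0, 0, 0, 0; 0, 0, 0, 0, 1; 0, 0, 0, -1, 0]]


def Nz (a : Fin 10) : Matrix (Fin 5 × Fin 5) (Fin 5 × Fin 5) ℤ :=
  ∑ b, ∑ c, Fz a b c • (Rz b ⊗ₖ Rz c)

def Sz : Matrix (Fin 5 × Fin 5) (Fin 5 × Fin 5) ℤ :=
  (∑ a, Fz 0 1 a • ⁅Nz a, Nz 2⁆)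
  + (∑ a, Fz 1 2 a • ⁅Nz a, Nz 0⁆)
  + (∑ a, Fz 2 0 a • ⁅Nz a, Nz 1⁆)

noncomputable def fC : Fin 10 → Fin 10 → Fin 10 → ℂ := fun a b c => ((Fz a b c : ℤ) : ℂ)
noncomputable def ρC : Fin 10 → Matrix (Fin 5) (Fin 5) ℂ := fun a => (Rz a).map ((↑) : ℤ → ℂ)

lemma key1 (hbar : ℂ) (a : Fin 10) :
    levelOne hbar fC ρC ρC a = (-(hbar/2)) • (Nz a).map ((↑) : ℤ → ℂ) := by
  unfold levelOne
  congr 1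
  ext ⟨i1,i2⟩ ⟨j1,j2⟩
  simp only [Nz, Matrix.sum_apply, Matrix.smul_apply, Matrix.kroneckerMap_apply,
    Matrix.map_apply, fC, ρC, smul_eq_mul]
  push_cast [mul_assoc]
  rfl

lemma lie_map (A B : Matrix (Fin 5 × Fin 5) (Fin 5 × Fin 5) ℤ) :
    ⁅A.map ((↑) : ℤ → ℂ), B.map ((↑) : ℤ → ℂ)⁆ = (⁅A, B⁆).map ((↑) : ℤ → ℂ) := by
  show A.map _ * B.map _ - B.map _ * A.map _ = (A * B - B * A).map _
  ext i j
  simp only [Matrix.map_apply, Matrix.sub_apply, Matrix.mul_apply]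
  push_cast
  ring

lemma sum_smul_map (g : Fin 10 → ℤ) (M : Fin 10 → Matrix (Fin 5 × Fin 5) (Fin 5 × Fin 5) ℤ) :
    (∑ a, ((g a : ℤ) : ℂ) • (M a).map ((↑) : ℤ → ℂ)) = (∑ a, g a • M a).map ((↑) : ℤ → ℂ) := by
  ext i j
  simp only [Matrix.sum_apply, Matrix.smul_apply, Matrix.map_apply, smul_eq_mul]
  push_cast
  rfl


lemma hF1 : ∀ a b c : Fin 10, Fz a b c = - Fz b a c := by decide
lemma hF2 : ∀ a b c : Fin 10, Fz a b c = - Fz a c b := by decide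
lemma hJz : ∀ u v w e : Fin 10,
    (∑ a, (Fz u v a * Fz a w e + Fz v w a * Fz a u e + Fz w u a * Fz a v e)) = 0 := by decide
lemma hRz : ∀ a b : Fin 10, Rz a * Rz b - Rz b * Rz a = ∑ c, Fz a b c • Rz c := by decide
lemma hSz : Sz (0,1) (2,3) = 1 := by decide

/-- For `ħ ≠ 0` it is not true in general that, for a Lie algebra `g` with totally
antisymmetric structure constants `f` satisfying the Jacobi identity and representations
`ρ', ρ''`, the operators `t_{a,1} = −(ħ/2)·∑ f_{abc} ρ'(t_b)⊗ρ''(t_c)` satisfy the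
Jacobi-type identity of `g[z]`
`f_{uva}[t_{a,1},t_{b,1}] + f_{vba}[t_{a,1},t_{u,1}] + f_{bua}[t_{a,1},t_{v,1}] = 0`;
equivalently, the assignment `t_a z⁰ ↦ t_{a,0}`, `t_a z¹ ↦ t_{a,1}`, `t_a zⁿ ↦ 0 (n ≥ 2)`
does not in general define a Lie algebra representation of `g[z]`. -/
theorem level_one_fails_jacobi (hbar : ℂ) (hh : hbar ≠ 0) :
    ¬ ∀ (n m : ℕ) (f : Fin n → Fin n → Fin n → ℂ)
        (ρ' ρ'' : Fin n → Matrix (Fin m) (Fin m) ℂ),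
      (∀ a b c, f a b c = - f b a c) →
      (∀ a b c, f a b c = - f a c b) →
      (∀ u v w e : Fin n,
        (∑ a, (f u v a * f a w e + f v w a * f a u e + f w u a * f a v e)) = 0) →
      (∀ a b, ⁅ρ' a, ρ' b⁆ = ∑ c, f a b c • ρ' c) →
      (∀ a b, ⁅ρ'' a, ρ'' b⁆ = ∑ c, f a b c • ρ'' c) →
      ∀ u v b : Fin n,
        (∑ a, f u v a • ⁅levelOne hbar f ρ' ρ'' a, levelOne hbar f ρ' ρ'' b⁆)
          + (∑ a, f v b a • ⁅levelOne hbar f ρ' ρ'' a, levelOne hbar f ρ' ρ'' u⁆)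
          + (∑ a, f b u a • ⁅levelOne hbar f ρ' ρ'' a, levelOne hbar f ρ' ρ'' v⁆) = 0 := by
  intro H
  have hrep : ∀ a b, ⁅ρC a, ρC b⁆ = ∑ c, fC a b c • ρC c := by
    intro a b
    show ρC a * ρC b - ρC b * ρC a = _
    ext i j
    have h := congrFun (congrFun (hRz a b) i) j
    simp only [Matrix.sub_apply, Matrix.mul_apply, Matrix.sum_apply, Matrix.smul_apply,
      smul_eq_mul] at h
    simp only [ρC, fC, Matrix.sub_apply, Matrix.mul_apply, Matrix.sum_apply,
      Matrix.smul_apply, Matrix.map_apply, smul_eq_mul]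
    exact_mod_cast congrArg ((↑) : ℤ → ℂ) h
  have key := H 10 5 fC ρC ρC
    (by intro a b c; simp only [fC]; exact_mod_cast congrArg ((↑) : ℤ → ℂ) (hF1 a b c))
    (by intro a b c; simp only [fC]; exact_mod_cast congrArg ((↑) : ℤ → ℂ) (hF2 a b c))
    (by intro u v w e
        simp only [fC]
        have h := congrArg ((↑) : ℤ → ℂ) (hJz u v w e)
        push_cast at h
        exact_mod_cast h)
    hrep hrep 0 1 2
  have hb : ∀ a b : Fin 10, ⁅levelOne hbar fC ρC ρC a, levelOne hbar fC ρC ρC b⁆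
      = (hbar^2/4) • ((⁅Nz a, Nz b⁆).map ((↑) : ℤ → ℂ)) := by
    intro a b
    rw [key1, key1, Ring.lie_def, smul_mul_smul_comm, smul_mul_smul_comm, ← smul_sub, ← Ring.lie_def, lie_map]
    congr 1
    ring
  simp only [hb, smul_smul, fC] at key
  have e1 : ∀ (b : Fin 10) (g : Fin 10 → ℤ),
      (∑ a, (((g a : ℤ) : ℂ) * (hbar^2/4)) • (⁅Nz a, Nz b⁆).map ((↑) : ℤ → ℂ))
        = (hbar^2/4) • ((∑ a, g a • ⁅Nz a, Nz b⁆).map ((↑) : ℤ → ℂ)) := by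
    intro b g
    rw [← sum_smul_map, Finset.smul_sum]
    refine Finset.sum_congr rfl fun a _ => ?_
    rw [smul_smul, mul_comm]
  rw [e1 2 (Fz 0 1), e1 0 (Fz 1 2), e1 1 (Fz 2 0), ← smul_add, ← smul_add,
    ← Matrix.map_add, ← Matrix.map_add] at key
  have h4 : (hbar^2/4 : ℂ) ≠ 0 := div_ne_zero (pow_ne_zero 2 hh) (by norm_num)
  have h3 : Sz.map ((↑) : ℤ → ℂ) = 0 := by
    have := (smul_eq_zero.mp key).resolve_left h4
    rw [Sz]
    exact this
  have h5 := congrFun (congrFun h3 ((0,1) : Fin 5 × Fin 5)) ((2,3) : Fin 5 × Fin 5)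
  rw [Matrix.map_apply, hSz] at h5
  simp at h5
  all_goals exact fun x y => by push_cast; ring
end

section
/- Let V = ℂⁿ be the vector representation of sl_n, with quadratic Casimir eigenvalue on the k-th exterior power given by c(∧ᵏV) = k(n−k)/(n(n−1)). For k₁+k₂+k₃ = n, setting β_i = c(∧^{k_i}V) − c(∧^{k_j}V) − c(∧^{k_l}V) ({i,j,l}={1,2,3}), one has β₁ = −2k₂k₃/(n(n−1)) (and cyclic permutations), and consequently the vertex angles are θ₁₂ = π(k₁+k₂)/n, θ₂₃ = π(k₂+k₃)/n, θ₃₁ = π(k₁+k₃)/n. -/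
open Real

/-- For the fundamental representations `∧^k V` of `sl_n` with Casimir eigenvalues
`c(∧^k V) = k(n−k)/(n(n−1))` and `k₁+k₂+k₃ = n`, one has
`β₁ = −2k₂k₃/(n(n−1))` (and cyclic permutations), and consequently the trivalent
vertex angles are `θ₁₂ = π(k₁+k₂)/n`, `θ₂₃ = π(k₂+k₃)/n`, `θ₃₁ = π(k₁+k₃)/n`. -/
theorem sl_n_fundamental_vertex_angles (n k₁ k₂ k₃ : ℕ) (hn : 2 ≤ n)
    (hk₁ : 1 ≤ k₁) (hk₂ : 1 ≤ k₂) (hk₃ : 1 ≤ k₃) (hsum : k₁ + k₂ + k₃ = n)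
    (c : ℕ → ℝ)
    (hc : ∀ k : ℕ, c k = ((k : ℝ) * ((n : ℝ) - (k : ℝ))) / ((n : ℝ) * ((n : ℝ) - 1)))
    (β₁ β₂ β₃ : ℝ)
    (hβ₁ : β₁ = c k₁ - c k₂ - c k₃) (hβ₂ : β₂ = c k₂ - c k₃ - c k₁)
    (hβ₃ : β₃ = c k₃ - c k₁ - c k₂) :
    (β₁ = -(2 * (k₂ : ℝ) * (k₃ : ℝ)) / ((n : ℝ) * ((n : ℝ) - 1)) ∧
     β₂ = -(2 * (k₃ : ℝ) * (k₁ : ℝ)) / ((n : ℝ) * ((n : ℝ) - 1)) ∧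
     β₃ = -(2 * (k₁ : ℝ) * (k₂ : ℝ)) / ((n : ℝ) * ((n : ℝ) - 1))) ∧
    (π - π * (β₁ * β₂) / (β₁ * β₂ + β₁ * β₃ + β₂ * β₃) = π * ((k₁ : ℝ) + (k₂ : ℝ)) / n ∧
     π - π * (β₂ * β₃) / (β₁ * β₂ + β₁ * β₃ + β₂ * β₃) = π * ((k₂ : ℝ) + (k₃ : ℝ)) / n ∧
     π - π * (β₁ * β₃) / (β₁ * β₂ + β₁ * β₃ + β₂ * β₃) = π * ((k₁ : ℝ) + (k₃ : ℝ)) / n) := by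
  have hn1 : (1:ℝ) ≤ (n:ℝ) - 1 := by
    have : (2:ℝ) ≤ (n:ℝ) := by exact_mod_cast hn
    linarith
  have hnp : (0:ℝ) < (n:ℝ) := by linarith
  have hnne : (n:ℝ) ≠ 0 := ne_of_gt hnp
  have hn1ne : (n:ℝ) - 1 ≠ 0 := by linarith
  have hp1 : (0:ℝ) < (k₁:ℝ) := by exact_mod_cast hk₁
  have hp2 : (0:ℝ) < (k₂:ℝ) := by exact_mod_cast hk₂
  have hp3 : (0:ℝ) < (k₃:ℝ) := by exact_mod_cast hk₃
  have hN : (n:ℝ) = (k₁:ℝ) + (k₂:ℝ) + (k₃:ℝ) := by exact_mod_cast hsum.symm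
  have e1 : β₁ = -(2 * (k₂ : ℝ) * (k₃ : ℝ)) / ((n : ℝ) * ((n : ℝ) - 1)) := by
    rw [hβ₁, hc, hc, hc, hN]; field_simp; ring
  have e2 : β₂ = -(2 * (k₃ : ℝ) * (k₁ : ℝ)) / ((n : ℝ) * ((n : ℝ) - 1)) := by
    rw [hβ₂, hc, hc, hc, hN]; field_simp; ring
  have e3 : β₃ = -(2 * (k₁ : ℝ) * (k₂ : ℝ)) / ((n : ℝ) * ((n : ℝ) - 1)) := by
    rw [hβ₃, hc, hc, hc, hN]; field_simp; ring
  have hD : ((n:ℝ) * ((n:ℝ) - 1)) ≠ 0 := mul_ne_zero hnne hn1ne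
  have hp12 : β₁ * β₂ =
      (4 * (k₁:ℝ) * k₂ * k₃ * k₃) / (((n:ℝ) * ((n:ℝ)-1)) * ((n:ℝ) * ((n:ℝ)-1))) := by
    rw [e1, e2, div_mul_div_comm]; congr 1; ring
  have hp23 : β₂ * β₃ =
      (4 * (k₁:ℝ) * k₂ * k₃ * k₁) / (((n:ℝ) * ((n:ℝ)-1)) * ((n:ℝ) * ((n:ℝ)-1))) := by
    rw [e2, e3, div_mul_div_comm]; congr 1; ring
  have hp13 : β₁ * β₃ =
      (4 * (k₁:ℝ) * k₂ * k₃ * k₂) / (((n:ℝ) * ((n:ℝ)-1)) * ((n:ℝ) * ((n:ℝ)-1))) := by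
    rw [e1, e3, div_mul_div_comm]; congr 1; ring
  have hS : β₁ * β₂ + β₁ * β₃ + β₂ * β₃ =
      (4 * (k₁:ℝ) * k₂ * k₃ * n) / (((n:ℝ) * ((n:ℝ)-1)) * ((n:ℝ) * ((n:ℝ)-1))) := by
    rw [hp12, hp13, hp23, ← add_div, ← add_div]
    congr 1
    rw [hN]; ring
  have hDD : (((n:ℝ) * ((n:ℝ)-1)) * ((n:ℝ) * ((n:ℝ)-1))) ≠ 0 := mul_ne_zero hD hD
  have h4 : (4 * (k₁:ℝ) * k₂ * k₃) ≠ 0 := by positivity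
  have h4n : (4 * (k₁:ℝ) * k₂ * k₃ * n) ≠ 0 := mul_ne_zero h4 hnne
  have key : ∀ m : ℝ, ((4 * (k₁:ℝ) * k₂ * k₃ * m) / (((n:ℝ) * ((n:ℝ)-1)) * ((n:ℝ) * ((n:ℝ)-1)))) /
      ((4 * (k₁:ℝ) * k₂ * k₃ * n) / (((n:ℝ) * ((n:ℝ)-1)) * ((n:ℝ) * ((n:ℝ)-1)))) = m / n := by
    intro m
    rw [div_div_div_comm, div_self hDD, div_one, mul_div_mul_left _ _ h4]
  have hs_ne : (k₁:ℝ) + k₂ + k₃ ≠ 0 := by positivity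
  refine ⟨⟨e1, e2, e3⟩, ?_, ?_, ?_⟩
  · rw [mul_div_assoc, hS, hp12, key, hN]; field_simp; ring
  · rw [mul_div_assoc, hS, hp23, key, hN]; field_simp; ring
  · rw [mul_div_assoc, hS, hp13, key, hN]; field_simp; ring
end

section
/- For a > 0, ∫_{−∞ < u < v < ∞} (v − u) / ((u² + a²)²(v² + a²)²) du dv = (3π/8)·a^{−5}. -/
open MeasureTheory Real

open Filter Set Topology

section aux
variable {a : ℝ} (ha : 0 < a)

-- antiderivative piece: arctan(x/a)
lemma hd_arctan (x : ℝ) (ha : 0 < a) :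
    HasDerivAt (fun v : ℝ => arctan (v / a)) (a / (x ^ 2 + a ^ 2)) x := by
  have h := (Real.hasDerivAt_arctan (x / a)).comp x ((hasDerivAt_id x).div_const a)
  refine h.congr_deriv ?_
  have h1 : x ^ 2 + a ^ 2 ≠ 0 := by positivity
  have ha' : a ≠ 0 := ne_of_gt ha
  field_simp
  ring

-- derivative of -(2(v²+a²))⁻¹ is v/(v²+a²)²
lemma hd1 (x : ℝ) (ha : 0 < a) :
    HasDerivAt (fun v : ℝ => -(2 * (v ^ 2 + a ^ 2))⁻¹) (x * ((x ^ 2 + a ^ 2) ^ 2)⁻¹) x := by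
  have hbase : HasDerivAt (fun v : ℝ => 2 * (v ^ 2 + a ^ 2)) (2 * (2 * x)) x := by
    simpa using (((hasDerivAt_pow 2 x).add_const (a ^ 2)).const_mul 2)
  have hne : 2 * (x ^ 2 + a ^ 2) ≠ 0 := by positivity
  have h := (hbase.inv hne).neg
  refine h.congr_deriv ?_
  have h1 : x ^ 2 + a ^ 2 ≠ 0 := by positivity
  field_simp

noncomputable def Ht (a : ℝ) : ℝ → ℝ :=
  fun v => 1 / (2 * a ^ 2) * (v / (v ^ 2 + a ^ 2)) + 1 / (2 * a ^ 3) * arctan (v / a)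

-- derivative of Ht is (v²+a²)⁻²
lemma hd2 (x : ℝ) (ha : 0 < a) :
    HasDerivAt (Ht a) (((x ^ 2 + a ^ 2) ^ 2)⁻¹) x := by
  have h1 : x ^ 2 + a ^ 2 ≠ 0 := by positivity
  have ha' : a ≠ 0 := ne_of_gt ha
  have hden : HasDerivAt (fun v : ℝ => v ^ 2 + a ^ 2) (2 * x) x := by
    simpa using ((hasDerivAt_pow 2 x).add_const (a ^ 2))
  have hq : HasDerivAt (fun v : ℝ => v / (v ^ 2 + a ^ 2))
      ((1 * (x ^ 2 + a ^ 2) - x * (2 * x)) / (x ^ 2 + a ^ 2) ^ 2) x :=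
    (hasDerivAt_id x).div hden h1
  have h := (hq.const_mul (1 / (2 * a ^ 2))).add ((hd_arctan x ha).const_mul (1 / (2 * a ^ 3)))
  refine h.congr_deriv ?_
  field_simp
  ring
end aux

section aux2
variable {a : ℝ}

noncomputable def Phi (a : ℝ) : ℝ → ℝ := fun u =>
  3 / (4 * a ^ 2) * Ht a u + π / (8 * a ^ 3) * (u ^ 2 + a ^ 2)⁻¹
    - 1 / (4 * a ^ 3) * (arctan (u / a) * (u ^ 2 + a ^ 2)⁻¹)

noncomputable def Og (a : ℝ) : ℝ → ℝ := fun u =>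
  ((u ^ 2 + a ^ 2) ^ 2)⁻¹ *
    (1 / (2 * a ^ 2) - π / (4 * a ^ 3) * u + 1 / (2 * a ^ 3) * (u * arctan (u / a)))

lemma hdPhi (x : ℝ) (ha : 0 < a) : HasDerivAt (Phi a) (Og a x) x := by
  have h1 : x ^ 2 + a ^ 2 ≠ 0 := by positivity
  have ha' : a ≠ 0 := ne_of_gt ha
  have hden : HasDerivAt (fun v : ℝ => v ^ 2 + a ^ 2) (2 * x) x := by
    simpa using ((hasDerivAt_pow 2 x).add_const (a ^ 2))
  have hinv : HasDerivAt (fun v : ℝ => (v ^ 2 + a ^ 2)⁻¹)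
      (-(2 * x) / (x ^ 2 + a ^ 2) ^ 2) x := hden.inv h1
  have hprod : HasDerivAt (fun v : ℝ => arctan (v / a) * (v ^ 2 + a ^ 2)⁻¹)
      (a / (x ^ 2 + a ^ 2) * (x ^ 2 + a ^ 2)⁻¹
        + arctan (x / a) * (-(2 * x) / (x ^ 2 + a ^ 2) ^ 2)) x :=
    (hd_arctan x ha).mul hinv
  have h := (((hd2 x ha).const_mul (3 / (4 * a ^ 2))).add
      (hinv.const_mul (π / (8 * a ^ 3)))).sub (hprod.const_mul (1 / (4 * a ^ 3)))
  refine h.congr_deriv ?_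
  unfold Og
  field_simp
  ring
end aux2

section tend
variable {a : ℝ}

lemma t1top (ha : 0 < a) : Tendsto (fun x : ℝ => x / (x ^ 2 + a ^ 2)) atTop (𝓝 0) := by
  apply squeeze_zero_norm' (a := fun x : ℝ => x⁻¹) _ tendsto_inv_atTop_zero
  filter_upwards [eventually_ge_atTop (1 : ℝ)] with x hx
  have hx0 : (0:ℝ) < x := lt_of_lt_of_le one_pos hx
  rw [Real.norm_eq_abs, abs_of_nonneg (by positivity), div_le_iff₀ (by positivity),
    inv_mul_eq_div, le_div_iff₀ hx0]
  nlinarith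

lemma t1bot (ha : 0 < a) : Tendsto (fun x : ℝ => x / (x ^ 2 + a ^ 2)) atBot (𝓝 0) := by
  have h := ((t1top ha).neg).comp tendsto_neg_atBot_atTop
  simp only [neg_zero] at h
  refine h.congr fun x => ?_
  simp [Function.comp, neg_div, neg_sq]

lemma t3top (ha : 0 < a) : Tendsto (fun x : ℝ => (x ^ 2 + a ^ 2)⁻¹) atTop (𝓝 0) := by
  apply squeeze_zero_norm' (a := fun x : ℝ => x⁻¹) _ tendsto_inv_atTop_zero
  filter_upwards [eventually_ge_atTop (1 : ℝ)] with x hx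
  have hx0 : (0:ℝ) < x := lt_of_lt_of_le one_pos hx
  rw [Real.norm_eq_abs, abs_of_nonneg (by positivity)]
  apply inv_anti₀ hx0
  nlinarith

lemma t3bot (ha : 0 < a) : Tendsto (fun x : ℝ => (x ^ 2 + a ^ 2)⁻¹) atBot (𝓝 0) := by
  have h := (t3top ha).comp tendsto_neg_atBot_atTop
  refine h.congr fun x => ?_
  simp [Function.comp, neg_sq]

lemma t2top (ha : 0 < a) : Tendsto (fun x : ℝ => arctan (x / a)) atTop (𝓝 (π / 2)) :=
  (tendsto_nhds_of_tendsto_nhdsWithin Real.tendsto_arctan_atTop).comp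
    (tendsto_id.atTop_div_const ha)

lemma t2bot (ha : 0 < a) : Tendsto (fun x : ℝ => arctan (x / a)) atBot (𝓝 (-(π / 2))) :=
  (tendsto_nhds_of_tendsto_nhdsWithin Real.tendsto_arctan_atBot).comp
    (tendsto_id.atBot_div_const ha)

lemma abs_arctan_le (y : ℝ) : |arctan y| ≤ π / 2 :=
  abs_le.mpr ⟨(Real.neg_pi_div_two_lt_arctan y).le, (Real.arctan_lt_pi_div_two y).le⟩

lemma t4 (ha : 0 < a) (l : Filter ℝ)
    (h3 : Tendsto (fun x : ℝ => (x ^ 2 + a ^ 2)⁻¹) l (𝓝 0)) :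
    Tendsto (fun x : ℝ => arctan (x / a) * (x ^ 2 + a ^ 2)⁻¹) l (𝓝 0) := by
  apply squeeze_zero_norm (a := fun x : ℝ => π / 2 * (x ^ 2 + a ^ 2)⁻¹)
  · intro x
    rw [Real.norm_eq_abs, abs_mul, abs_of_nonneg (a := (x ^ 2 + a ^ 2)⁻¹) (by positivity)]
    exact mul_le_mul_of_nonneg_right (abs_arctan_le _) (by positivity)
  · simpa using h3.const_mul (π / 2)

lemma tHtTop (ha : 0 < a) : Tendsto (Ht a) atTop (𝓝 (1 / (2 * a ^ 3) * (π / 2))) := by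
  have h := ((t1top ha).const_mul (1 / (2 * a ^ 2))).add ((t2top ha).const_mul (1 / (2 * a ^ 3)))
  have h2 : 1 / (2 * a ^ 2) * 0 + 1 / (2 * a ^ 3) * (π / 2) = 1 / (2 * a ^ 3) * (π / 2) := by ring
  rw [← h2]; exact h

lemma tHtBot (ha : 0 < a) : Tendsto (Ht a) atBot (𝓝 (1 / (2 * a ^ 3) * (-(π / 2)))) := by
  have h := ((t1bot ha).const_mul (1 / (2 * a ^ 2))).add ((t2bot ha).const_mul (1 / (2 * a ^ 3)))
  have h2 : 1 / (2 * a ^ 2) * 0 + 1 / (2 * a ^ 3) * (-(π / 2)) = 1 / (2 * a ^ 3) * (-(π / 2)) := by ring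
  rw [← h2]; exact h

lemma tPhiTop (ha : 0 < a) :
    Tendsto (Phi a) atTop (𝓝 (3 / (4 * a ^ 2) * (1 / (2 * a ^ 3) * (π / 2)))) := by
  have h := (((tHtTop ha).const_mul (3 / (4 * a ^ 2))).add
      ((t3top ha).const_mul (π / (8 * a ^ 3)))).sub
      ((t4 ha _ (t3top ha)).const_mul (1 / (4 * a ^ 3)))
  have h2 : 3 / (4 * a ^ 2) * (1 / (2 * a ^ 3) * (π / 2)) + π / (8 * a ^ 3) * 0
      - 1 / (4 * a ^ 3) * 0 = 3 / (4 * a ^ 2) * (1 / (2 * a ^ 3) * (π / 2)) := by ring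
  rw [← h2]; exact h

lemma tPhiBot (ha : 0 < a) :
    Tendsto (Phi a) atBot (𝓝 (3 / (4 * a ^ 2) * (1 / (2 * a ^ 3) * (-(π / 2))))) := by
  have h := (((tHtBot ha).const_mul (3 / (4 * a ^ 2))).add
      ((t3bot ha).const_mul (π / (8 * a ^ 3)))).sub
      ((t4 ha _ (t3bot ha)).const_mul (1 / (4 * a ^ 3)))
  have h2 : 3 / (4 * a ^ 2) * (1 / (2 * a ^ 3) * (-(π / 2))) + π / (8 * a ^ 3) * 0
      - 1 / (4 * a ^ 3) * 0 = 3 / (4 * a ^ 2) * (1 / (2 * a ^ 3) * (-(π / 2))) := by ring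
  rw [← h2]; exact h
end tend

section integ
variable {a : ℝ}

lemma integrable_of_le_inv (f : ℝ → ℝ) (c : ℝ) (hm : AEStronglyMeasurable f (volume : Measure ℝ))
    (h : ∀ x, ‖f x‖ ≤ c * (1 + x ^ 2)⁻¹) : Integrable f :=
  (integrable_inv_one_add_sq.const_mul c).mono' hm (Filter.Eventually.of_forall h)

lemma base1 (ha : 0 < a) (x : ℝ) :
    ((x ^ 2 + a ^ 2) ^ 2)⁻¹ ≤ ((min a 1) ^ 4)⁻¹ * (1 + x ^ 2)⁻¹ := by
  set m := min a 1 with hmdef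
  have hm : 0 < m := lt_min ha one_pos
  have hma : m ≤ a := min_le_left _ _
  have hm1 : m ≤ 1 := min_le_right _ _
  rw [← mul_inv]
  apply inv_anti₀ (by positivity)
  have key : m ^ 2 * (1 + x ^ 2) ≤ x ^ 2 + a ^ 2 := by
    nlinarith [pow_le_pow_left₀ hm.le hma 2, pow_le_pow_left₀ hm.le hm1 2, sq_nonneg x]
  nlinarith [mul_self_le_mul_self (by positivity : (0:ℝ) ≤ m ^ 2 * (1 + x ^ 2)) key,
    sq_nonneg x, pow_pos hm 4]

lemma base2 (ha : 0 < a) (x : ℝ) :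
    |x| * ((x ^ 2 + a ^ 2) ^ 2)⁻¹ ≤ (2 * a * (min a 1) ^ 2)⁻¹ * (1 + x ^ 2)⁻¹ := by
  set m := min a 1 with hmdef
  have hm : 0 < m := lt_min ha one_pos
  have hma : m ≤ a := min_le_left _ _
  have hm1 : m ≤ 1 := min_le_right _ _
  rw [← mul_inv, ← div_eq_mul_inv, inv_eq_one_div,
    div_le_div_iff₀ (by positivity) (by positivity)]
  have e1 : 2 * a * |x| ≤ x ^ 2 + a ^ 2 := by nlinarith [sq_nonneg (|x| - a), sq_abs x]
  have e2 : m ^ 2 * (1 + x ^ 2) ≤ x ^ 2 + a ^ 2 := by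
    nlinarith [pow_le_pow_left₀ hm.le hma 2, pow_le_pow_left₀ hm.le hm1 2, sq_nonneg x]
  have e3 := mul_le_mul e1 e2 (by positivity) (by positivity)
  nlinarith [e3]

lemma cont_g (ha : 0 < a) : Continuous fun x : ℝ => ((x ^ 2 + a ^ 2) ^ 2)⁻¹ :=
  Continuous.inv₀ (by continuity) fun x => by positivity

lemma int_g (ha : 0 < a) : Integrable (fun x : ℝ => ((x ^ 2 + a ^ 2) ^ 2)⁻¹) := by
  apply integrable_of_le_inv _ ((min a 1 : ℝ) ^ 4)⁻¹ (cont_g ha).aestronglyMeasurable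
  intro x
  rw [Real.norm_eq_abs, abs_of_nonneg (by positivity)]
  exact base1 ha x

lemma int_xg (ha : 0 < a) : Integrable (fun x : ℝ => x * ((x ^ 2 + a ^ 2) ^ 2)⁻¹) := by
  apply integrable_of_le_inv _ (2 * a * (min a 1 : ℝ) ^ 2)⁻¹
    (continuous_id.mul (cont_g ha)).aestronglyMeasurable
  intro x
  rw [Real.norm_eq_abs, Pi.mul_apply, abs_mul, abs_of_nonneg (a := ((x ^ 2 + a ^ 2) ^ 2)⁻¹) (by positivity)]
  exact base2 ha x

lemma int_absxg (ha : 0 < a) : Integrable (fun x : ℝ => |x| * ((x ^ 2 + a ^ 2) ^ 2)⁻¹) := by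
  apply integrable_of_le_inv _ (2 * a * (min a 1 : ℝ) ^ 2)⁻¹
    (continuous_abs.mul (cont_g ha)).aestronglyMeasurable
  intro x
  rw [Real.norm_eq_abs, Pi.mul_apply, abs_mul, abs_abs,
    abs_of_nonneg (a := ((x ^ 2 + a ^ 2) ^ 2)⁻¹) (by positivity)]
  exact base2 ha x

lemma int_Og (ha : 0 < a) : Integrable (Og a) := by
  have ha' : a ≠ 0 := ne_of_gt ha
  have hcont : Continuous (Og a) := by
    apply (cont_g ha).mul
    apply (continuous_const.sub (continuous_const.mul continuous_id)).add
    exact continuous_const.mul (continuous_id.mul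
      ((Real.continuous_arctan).comp (continuous_id.div_const a)))
  apply integrable_of_le_inv _
    (1 / (2 * a ^ 2) * ((min a 1 : ℝ) ^ 4)⁻¹ + π / (2 * a ^ 3) * (2 * a * (min a 1 : ℝ) ^ 2)⁻¹)
    hcont.aestronglyMeasurable
  intro x
  have hE : (0:ℝ) < (x ^ 2 + a ^ 2) ^ 2 := by positivity
  have habs : ‖Og a x‖ ≤ ((x ^ 2 + a ^ 2) ^ 2)⁻¹ * (1 / (2 * a ^ 2) + π / (2 * a ^ 3) * |x|) := by
    rw [Real.norm_eq_abs]
    unfold Og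
    rw [abs_mul, abs_of_nonneg (a := ((x ^ 2 + a ^ 2) ^ 2)⁻¹) (by positivity)]
    apply mul_le_mul_of_nonneg_left _ (by positivity)
    have t1 : |1 / (2 * a ^ 2) - π / (4 * a ^ 3) * x + 1 / (2 * a ^ 3) * (x * arctan (x / a))|
        ≤ |1 / (2 * a ^ 2) - π / (4 * a ^ 3) * x| + |1 / (2 * a ^ 3) * (x * arctan (x / a))| :=
      abs_add_le _ _
    have t2 : |1 / (2 * a ^ 2) - π / (4 * a ^ 3) * x|
        ≤ |1 / (2 * a ^ 2)| + |π / (4 * a ^ 3) * x| := abs_sub _ _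
    have t3 : |1 / (2 * a ^ 3) * (x * arctan (x / a))|
        ≤ 1 / (2 * a ^ 3) * (|x| * (π / 2)) := by
      rw [abs_mul, abs_mul, abs_of_nonneg (by positivity : (0:ℝ) ≤ 1 / (2 * a ^ 3))]
      apply mul_le_mul_of_nonneg_left _ (by positivity)
      exact mul_le_mul_of_nonneg_left (abs_arctan_le _) (abs_nonneg x)
    have t4 : |π / (4 * a ^ 3) * x| = π / (4 * a ^ 3) * |x| := by
      rw [abs_mul, abs_of_nonneg (by positivity : (0:ℝ) ≤ π / (4 * a ^ 3))]
    have t5 : |1 / (2 * a ^ 2)| = 1 / (2 * a ^ 2) := abs_of_nonneg (by positivity)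
    calc |1 / (2 * a ^ 2) - π / (4 * a ^ 3) * x + 1 / (2 * a ^ 3) * (x * arctan (x / a))|
        ≤ |1 / (2 * a ^ 2)| + |π / (4 * a ^ 3) * x| + |1 / (2 * a ^ 3) * (x * arctan (x / a))| := by
          linarith
      _ ≤ 1 / (2 * a ^ 2) + π / (2 * a ^ 3) * |x| := by
          have t6 : 1 / (2 * a ^ 3) * (|x| * (π / 2)) = π / (4 * a ^ 3) * |x| := by ring
          have t7 : π / (2 * a ^ 3) * |x| = 2 * (π / (4 * a ^ 3) * |x|) := by ring
          rw [t4, t5]; linarith [t3, t6, t7]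
  refine habs.trans ?_
  have b1 := base1 ha x
  have b2 := base2 ha x
  have hc1 : (0:ℝ) ≤ 1 / (2 * a ^ 2) := by positivity
  have hc2 : (0:ℝ) ≤ π / (2 * a ^ 3) := by positivity
  nlinarith [mul_le_mul_of_nonneg_left b1 hc1, mul_le_mul_of_nonneg_left b2 hc2,
    abs_nonneg x, hE.le]
end integ

section main
variable {a : ℝ}

lemma outer (ha : 0 < a) : ∫ u : ℝ, Og a u = 3 * π / 8 / a ^ 5 := by
  rw [integral_of_hasDerivAt_of_tendsto (fun x => hdPhi x ha) (int_Og ha)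
    (tPhiBot ha) (tPhiTop ha)]
  have ha' : a ≠ 0 := ne_of_gt ha
  field_simp
  ring

lemma t5top (ha : 0 < a) :
    Tendsto (fun v : ℝ => -(2 * (v ^ 2 + a ^ 2))⁻¹) atTop (𝓝 0) := by
  have h := ((t3top ha).const_mul (2⁻¹ : ℝ)).neg
  simp only [mul_zero, neg_zero] at h
  refine h.congr fun x => ?_
  rw [mul_inv]

lemma inner_int (ha : 0 < a) (u : ℝ) :
    ∫ v in Set.Ioi u, (v - u) * ((v ^ 2 + a ^ 2) ^ 2)⁻¹
      = (0 - u * (1 / (2 * a ^ 3) * (π / 2)))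
        - (-(2 * (u ^ 2 + a ^ 2))⁻¹ - u * Ht a u) := by
  apply integral_Ioi_of_hasDerivAt_of_tendsto'
    (f := fun v => -(2 * (v ^ 2 + a ^ 2))⁻¹ - u * Ht a v)
  · intro x _
    have h := (hd1 x ha).sub ((hd2 x ha).const_mul u)
    refine h.congr_deriv ?_
    ring
  · have h1 : Integrable (fun v : ℝ => v * ((v ^ 2 + a ^ 2) ^ 2)⁻¹
        - u * ((v ^ 2 + a ^ 2) ^ 2)⁻¹) := (int_xg ha).sub ((int_g ha).const_mul u)
    have h2 : (fun v : ℝ => (v - u) * ((v ^ 2 + a ^ 2) ^ 2)⁻¹)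
        = fun v : ℝ => v * ((v ^ 2 + a ^ 2) ^ 2)⁻¹ - u * ((v ^ 2 + a ^ 2) ^ 2)⁻¹ := by
      funext v; ring
    rw [h2]
    exact h1.integrableOn
  · exact (t5top ha).sub ((tHtTop ha).const_mul u)
end main

/-- The framing-anomaly integral: for `a > 0`,
`∫_{u < v} (v − u)/((u²+a²)²(v²+a²)²) du dv = (3π/8)·a⁻⁵`. -/
theorem framing_anomaly_integral (a : ℝ) (ha : 0 < a) :
    (∫ q in {q : ℝ × ℝ | q.1 < q.2},
        (q.2 - q.1) / ((q.1 ^ 2 + a ^ 2) ^ 2 * (q.2 ^ 2 + a ^ 2) ^ 2))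
      = 3 * π / 8 / a ^ 5 := by
  have ha' : a ≠ 0 := ne_of_gt ha
  set F : ℝ × ℝ → ℝ :=
    fun q => (q.2 - q.1) / ((q.1 ^ 2 + a ^ 2) ^ 2 * (q.2 ^ 2 + a ^ 2) ^ 2) with hF
  set S : Set (ℝ × ℝ) := {q : ℝ × ℝ | q.1 < q.2} with hSdef
  have hS : MeasurableSet S := measurableSet_lt measurable_fst measurable_snd
  have hFcont : Continuous F := by
    apply Continuous.div (by fun_prop) (by fun_prop)
    intro q
    positivity
  -- Integrability of F on the product space
  have hFint : Integrable F (volume.prod volume) := by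
    have hψ : Integrable (fun q : ℝ × ℝ =>
        |q.1| * ((q.1 ^ 2 + a ^ 2) ^ 2)⁻¹ * ((q.2 ^ 2 + a ^ 2) ^ 2)⁻¹
          + ((q.1 ^ 2 + a ^ 2) ^ 2)⁻¹ * (|q.2| * ((q.2 ^ 2 + a ^ 2) ^ 2)⁻¹))
        (volume.prod volume) :=
      ((int_absxg ha).mul_prod (int_g ha)).add ((int_g ha).mul_prod (int_absxg ha))
    apply hψ.mono' hFcont.aestronglyMeasurable
    apply Filter.Eventually.of_forall
    rintro ⟨u, v⟩
    have hD : (0:ℝ) < (u ^ 2 + a ^ 2) ^ 2 := by positivity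
    have hE : (0:ℝ) < (v ^ 2 + a ^ 2) ^ 2 := by positivity
    have h1 : ‖F (u, v)‖ = |v - u| * ((u ^ 2 + a ^ 2) ^ 2 * (v ^ 2 + a ^ 2) ^ 2)⁻¹ := by
      show ‖(v - u) / ((u ^ 2 + a ^ 2) ^ 2 * (v ^ 2 + a ^ 2) ^ 2)‖ = _
      rw [Real.norm_eq_abs, abs_div,
        abs_of_pos (show (0:ℝ) < (u ^ 2 + a ^ 2) ^ 2 * (v ^ 2 + a ^ 2) ^ 2 by positivity),
        div_eq_mul_inv]
    have h2 : |v - u| ≤ |v| + |u| := by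
      rw [sub_eq_add_neg]
      exact (abs_add_le _ _).trans_eq (by rw [abs_neg])
    rw [h1]
    have h3 : (|v| + |u|) * ((u ^ 2 + a ^ 2) ^ 2 * (v ^ 2 + a ^ 2) ^ 2)⁻¹
        = |u| * ((u ^ 2 + a ^ 2) ^ 2)⁻¹ * ((v ^ 2 + a ^ 2) ^ 2)⁻¹
          + ((u ^ 2 + a ^ 2) ^ 2)⁻¹ * (|v| * ((v ^ 2 + a ^ 2) ^ 2)⁻¹) := by
      rw [mul_inv]; ring
    calc |v - u| * ((u ^ 2 + a ^ 2) ^ 2 * (v ^ 2 + a ^ 2) ^ 2)⁻¹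
        ≤ (|v| + |u|) * ((u ^ 2 + a ^ 2) ^ 2 * (v ^ 2 + a ^ 2) ^ 2)⁻¹ :=
          mul_le_mul_of_nonneg_right h2 (by positivity)
      _ = _ := h3
  -- rewrite the set integral via indicator and Fubini
  rw [← integral_indicator hS, Measure.volume_eq_prod,
    integral_prod _ (hFint.indicator hS)]
  have hinner : ∀ x : ℝ, (∫ y : ℝ, S.indicator F (x, y)) = Og a x := by
    intro x
    have e1 : (fun y : ℝ => S.indicator F (x, y))
        = (Set.Ioi x).indicator (fun y : ℝ => F (x, y)) := by
      funext y
      by_cases h : x < y <;>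
        simp [Set.indicator_apply, h, hSdef, Set.mem_setOf_eq, Set.mem_Ioi]
    rw [e1, integral_indicator measurableSet_Ioi]
    have e2 : ∀ y ∈ Set.Ioi x, F (x, y)
        = ((x ^ 2 + a ^ 2) ^ 2)⁻¹ * ((y - x) * ((y ^ 2 + a ^ 2) ^ 2)⁻¹) := by
      intro y _
      rw [hF]
      have h1 : (x ^ 2 + a ^ 2) ^ 2 ≠ 0 := by positivity
      have h2 : (y ^ 2 + a ^ 2) ^ 2 ≠ 0 := by positivity
      field_simp
    rw [setIntegral_congr_fun measurableSet_Ioi e2, integral_const_mul, inner_int ha x]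
    unfold Og Ht
    have h1 : x ^ 2 + a ^ 2 ≠ 0 := by positivity
    field_simp
    ring
  calc (∫ x : ℝ, ∫ y : ℝ, S.indicator F (x, y))
      = ∫ x : ℝ, Og a x := integral_congr_ae (Filter.Eventually.of_forall hinner)
    _ = 3 * π / 8 / a ^ 5 := outer ha
end
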